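/- For n ≥ 4, the exponent set of PSC_n^{0,0} equals {2t : 2 ≤ t ≤ n−2}; in particular the maximum exponent of a primitive symmetric companion matrix with zero diagonal and a_{n,1}=0 is 2(n−2), attained by the lollipop graph consisting of a path 1−2−⋯−n together with the edge {n, n−2}. -/

import Mathlib

def IsPrimitive {n : ℕ} (A : Matrix (Fin n) (Fin n) ℝ) : Prop :=
  (∀ i j, 0 ≤ A i j) ∧ ∃ k : ℕ, 0 < k ∧ ∀ i j, 0 < (A ^ k) i j

def ExpIs {n : ℕ} (A : Matrix (Fin n) (Fin n) ℝ) (e : ℕ) : Prop :=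
  IsLeast {k : ℕ | 0 < k ∧ ∀ i j, 0 < (A ^ k) i j} e

/-- A `(0,1)` companion matrix: superdiagonal entries `1` and all other entries
`0` in the first `n-1` rows; last-row entries in `{0,1}`. -/
def IsCompanion {n : ℕ} (C : Matrix (Fin n) (Fin n) ℝ) : Prop :=
  ∀ i j : Fin n,
    if (i : ℕ) + 1 < n then (C i j = if (j : ℕ) = (i : ℕ) + 1 then 1 else 0)
    else (C i j = 0 ∨ C i j = 1)

/-- The set `C_n^{α,ε}` of symmetric companion matrices `C + Cᵀ` with
`c_{n,1} = α` and `c_{n,n} = ε`. -/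
def companionClass (n : ℕ) (hn : 0 < n) (α ε : ℝ) :
    Set (Matrix (Fin n) (Fin n) ℝ) :=
  {A | ∃ C : Matrix (Fin n) (Fin n) ℝ, IsCompanion C ∧
    C ⟨n - 1, by omega⟩ ⟨0, hn⟩ = α ∧ C ⟨n - 1, by omega⟩ ⟨n - 1, by omega⟩ = ε ∧
    A = C + C.transpose}

/-- `mRun S` : the maximum length of a run of consecutive integers contained in
`S` (`0` for the empty set). -/
noncomputable def mRun (S : Set ℕ) : ℕ := sSup {L : ℕ | ∃ a : ℕ, ∀ t, t < L → a + t ∈ S}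

/-- The exponent set of a family of matrices. -/
def expSet {n : ℕ} (X : Set (Matrix (Fin n) (Fin n) ℝ)) : Set ℕ :=
  {e | ∃ A ∈ X, IsPrimitive A ∧ ExpIs A e}




namespace PSCaux

variable {n : ℕ}

lemma pow_entry_nonneg {M : Matrix (Fin n) (Fin n) ℝ} (hM : ∀ i j, 0 ≤ M i j) :
    ∀ (k : ℕ) (i j : Fin n), 0 ≤ (M ^ k) i j := by
  intro k
  induction k with
  | zero => intro i j; rw [pow_zero, Matrix.one_apply]; split <;> norm_num
  | succ k ih =>
    intro i j
    rw [pow_succ, Matrix.mul_apply]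
    exact Finset.sum_nonneg fun x _ => mul_nonneg (ih i x) (hM x j)

lemma walk_concat {M : Matrix (Fin n) (Fin n) ℝ} (hM : ∀ i j, 0 ≤ M i j)
    {a b : ℕ} {u w v : Fin n} (h1 : 0 < (M ^ a) u w) (h2 : 0 < (M ^ b) w v) :
    0 < (M ^ (a + b)) u v := by
  rw [pow_add, Matrix.mul_apply]
  refine Finset.sum_pos' (fun x _ => mul_nonneg (pow_entry_nonneg hM a u x) (pow_entry_nonneg hM b x v)) ⟨w, Finset.mem_univ w, mul_pos h1 h2⟩

lemma walk_cons {M : Matrix (Fin n) (Fin n) ℝ} (hM : ∀ i j, 0 ≤ M i j)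
    {k : ℕ} {u w v : Fin n} (h1 : 0 < M u w) (h2 : 0 < (M ^ k) w v) :
    0 < (M ^ (k + 1)) u v := by
  have := walk_concat hM (a := 1) (b := k) (by rwa [pow_one]) h2
  rwa [Nat.add_comm] at this

lemma walk_snoc {M : Matrix (Fin n) (Fin n) ℝ} (hM : ∀ i j, 0 ≤ M i j)
    {k : ℕ} {u w v : Fin n} (h1 : 0 < (M ^ k) u w) (h2 : 0 < M w v) :
    0 < (M ^ (k + 1)) u v :=
  walk_concat hM h1 (by rwa [pow_one])

lemma walk_step {M : Matrix (Fin n) (Fin n) ℝ} (hM : ∀ i j, 0 ≤ M i j)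
    {k : ℕ} {u v : Fin n} (h : 0 < (M ^ (k + 1)) u v) :
    ∃ w, 0 < M u w ∧ 0 < (M ^ k) w v := by
  rw [pow_succ', Matrix.mul_apply] at h
  by_contra hc
  push_neg at hc
  refine absurd h (not_lt.2 (le_of_eq (Finset.sum_eq_zero ?_)))
  intro x _
  rcases (hM u x).lt_or_eq with hx | hx
  · have h2 := hc x hx
    have h3 := pow_entry_nonneg hM k x v
    have : (M ^ k) x v = 0 := le_antisymm h2 h3
    rw [this, mul_zero]
  · rw [← hx, zero_mul]

lemma walk_step_right {M : Matrix (Fin n) (Fin n) ℝ} (hM : ∀ i j, 0 ≤ M i j)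
    {k : ℕ} {u v : Fin n} (h : 0 < (M ^ (k + 1)) u v) :
    ∃ w, 0 < (M ^ k) u w ∧ 0 < M w v := by
  rw [pow_succ, Matrix.mul_apply] at h
  by_contra hc
  push_neg at hc
  refine absurd h (not_lt.2 (le_of_eq (Finset.sum_eq_zero ?_)))
  intro x _
  rcases (pow_entry_nonneg hM k u x).lt_or_eq with hx | hx
  · have h2 := hc x hx
    have : M x v = 0 := le_antisymm h2 (hM x v)
    rw [this, mul_zero]
  · rw [← hx, zero_mul]

lemma pow_entry_mono {M N : Matrix (Fin n) (Fin n) ℝ} (hM : ∀ i j, 0 ≤ M i j)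
    (hMN : ∀ i j, M i j ≤ N i j) : ∀ (k : ℕ) (i j : Fin n), (M ^ k) i j ≤ (N ^ k) i j := by
  intro k
  have hN : ∀ i j, 0 ≤ N i j := fun i j => le_trans (hM i j) (hMN i j)
  induction k with
  | zero => intro i j; simp
  | succ k ih =>
    intro i j
    rw [pow_succ, pow_succ, Matrix.mul_apply, Matrix.mul_apply]
    apply Finset.sum_le_sum
    intro x _
    exact mul_le_mul (ih i x) (hMN x j) (hM x j) (pow_entry_nonneg hN k i x)

lemma pow_symm {M : Matrix (Fin n) (Fin n) ℝ} (hsym : ∀ i j, M i j = M j i)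
    (k : ℕ) (i j : Fin n) : (M ^ k) i j = (M ^ k) j i := by
  have hT : M.transpose = M := by ext a b; exact hsym b a
  conv_lhs => rw [← hT]
  rw [← Matrix.transpose_pow, Matrix.transpose_apply]

lemma nat_dist_parity (a b : ℕ) : (Nat.dist a b + a + b) % 2 = 0 := by
  simp [Nat.dist]; omega



/-- Structure packaging the graph-theoretic interface of our matrices. -/
structure Nice (n : ℕ) (A : Matrix (Fin n) (Fin n) ℝ) : Prop where
  hn : 4 ≤ n
  nonneg : ∀ i j, 0 ≤ A i j
  symm : ∀ i j, A i j = A j i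
  path : ∀ i j : Fin n, (i : ℕ) + 1 = (j : ℕ) → 0 < A i j
  struct : ∀ i j : Fin n, 0 < A i j →
    (j : ℕ) = (i : ℕ) + 1 ∨ (i : ℕ) = (j : ℕ) + 1 ∨
    ((i : ℕ) = n - 1 ∧ (j : ℕ) < n - 1) ∨ ((j : ℕ) = n - 1 ∧ (i : ℕ) < n - 1)

variable {A : Matrix (Fin n) (Fin n) ℝ}

section Nice
variable (hN : Nice n A)
include hN

/-- the hub vertex `n-1`. -/
def hub (hN : Nice n A) : Fin n := ⟨n - 1, by have := hN.hn; omega⟩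

lemma hub_val : (hub hN : ℕ) = n - 1 := rfl

lemma walk_path_aux : ∀ (d : ℕ) (u v : Fin n), Nat.dist (u : ℕ) (v : ℕ) = d →
    0 < (A ^ d) u v := by
  intro d
  induction d with
  | zero =>
    intro u v h
    have : (u : ℕ) = (v : ℕ) := by simp [Nat.dist] at h; omega
    have huv : u = v := Fin.ext this
    subst huv
    rw [pow_zero, Matrix.one_apply_eq]
    norm_num
  | succ d ih =>
    intro u v h
    rcases Nat.lt_or_ge (u : ℕ) (v : ℕ) with hlt | hge
    · have hw : (u : ℕ) + 1 < n := by omega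
      set w : Fin n := ⟨(u : ℕ) + 1, hw⟩ with hwdef
      have hstep : 0 < A u w := hN.path u w rfl
      have hdist : Nat.dist (w : ℕ) (v : ℕ) = d := by
        simp [Nat.dist] at h ⊢; have hwv : (w : ℕ) = (u : ℕ) + 1 := rfl; omega
      exact walk_cons hN.nonneg hstep (ih w v hdist)
    · have hne : (u : ℕ) ≠ (v : ℕ) := by simp [Nat.dist] at h; omega
      have hgt : (v : ℕ) < (u : ℕ) := by omega
      have hupos : 0 < (u : ℕ) := by omega
      have hw : (u : ℕ) - 1 < n := by omega
      set w : Fin n := ⟨(u : ℕ) - 1, hw⟩ with hwdef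
      have hstep : 0 < A u w := by
        have : 0 < A w u := hN.path w u (by simp [hwdef]; omega)
        rwa [hN.symm]
      have hdist : Nat.dist (w : ℕ) (v : ℕ) = d := by
        simp [Nat.dist] at h ⊢; have hwv : (w : ℕ) = (u : ℕ) - 1 := rfl; omega
      exact walk_cons hN.nonneg hstep (ih w v hdist)

lemma walk_path (u v : Fin n) : 0 < (A ^ (Nat.dist (u : ℕ) (v : ℕ))) u v :=
  walk_path_aux hN _ u v rfl

lemma exists_nbr (v : Fin n) : ∃ w : Fin n, 0 < A v w := by
  rcases Nat.lt_or_ge ((v : ℕ) + 1) n with h | h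
  · exact ⟨⟨(v : ℕ) + 1, h⟩, hN.path _ _ rfl⟩
  · have hv : (v : ℕ) = n - 1 := by have := v.isLt; omega
    have hw : n - 2 < n := by have := hN.hn; omega
    refine ⟨⟨n - 2, hw⟩, ?_⟩
    rw [hN.symm]
    apply hN.path
    simp [hv]; have := hN.hn; omega

lemma walk_pad2 {k : ℕ} {u v : Fin n} (h : 0 < (A ^ k) u v) : 0 < (A ^ (k + 2)) u v := by
  obtain ⟨w, hw⟩ := exists_nbr hN v
  have hwv : 0 < A w v := by rw [hN.symm]; exact hw
  exact walk_snoc hN.nonneg (walk_snoc hN.nonneg h hw) hwv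

lemma walk_pad {k m : ℕ} {u v : Fin n} (h : 0 < (A ^ k) u v) (hkm : k ≤ m)
    (hpar : (m - k) % 2 = 0) : 0 < (A ^ m) u v := by
  obtain ⟨d, hd⟩ : ∃ d, m = k + 2 * d := ⟨(m - k) / 2, by omega⟩
  subst hd
  clear hkm hpar
  induction d with
  | zero => simpa using h
  | succ d ih =>
    have : k + 2 * (d + 1) = (k + 2 * d) + 2 := by ring
    rw [this]
    exact walk_pad2 hN ih

/-- the path-restricted matrix (hub row and column deleted) -/
def pathM (hN : Nice n A) : Matrix (Fin n) (Fin n) ℝ :=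
  Matrix.of fun i j => if i = hub hN ∨ j = hub hN then 0 else A i j

lemma pathM_nonneg : ∀ i j, 0 ≤ pathM hN i j := by
  intro i j
  simp only [pathM, Matrix.of_apply]
  split
  · exact le_refl 0
  · exact hN.nonneg i j

lemma pathM_le : ∀ i j, pathM hN i j ≤ A i j := by
  intro i j
  simp only [pathM, Matrix.of_apply]
  split
  · exact hN.nonneg i j
  · exact le_refl _

lemma pathM_pos {i j : Fin n} (h : 0 < pathM hN i j) :
    i ≠ hub hN ∧ j ≠ hub hN ∧ 0 < A i j := by
  by_contra hc
  simp only [pathM, Matrix.of_apply] at h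
  rcases em (i = hub hN ∨ j = hub hN) with hor | hor
  · rw [if_pos hor] at h; exact lt_irrefl 0 h
  · rw [if_neg hor] at h
    push_neg at hor
    exact hc ⟨hor.1, hor.2, h⟩

lemma pathM_pos_of {i j : Fin n} (hi : i ≠ hub hN) (hj : j ≠ hub hN) (h : 0 < A i j) :
    0 < pathM hN i j := by
  simp only [pathM, Matrix.of_apply]
  rw [if_neg (by tauto)]
  exact h

lemma walk_pathM_mono {k : ℕ} {u v : Fin n} (h : 0 < (pathM hN ^ k) u v) :
    0 < (A ^ k) u v :=
  lt_of_lt_of_le h (pow_entry_mono (pathM_nonneg hN) (pathM_le hN) k u v)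

lemma pathM_step_dist {i j : Fin n} (h : 0 < pathM hN i j) :
    Nat.dist (i : ℕ) (j : ℕ) = 1 := by
  obtain ⟨hi, hj, hA⟩ := pathM_pos hN h
  have hi' : (i : ℕ) ≠ n - 1 := fun hc => hi (Fin.ext hc)
  have hj' : (j : ℕ) ≠ n - 1 := fun hc => hj (Fin.ext hc)
  rcases hN.struct i j hA with h1 | h1 | h1 | h1
  · simp [Nat.dist]; omega
  · simp [Nat.dist]; omega
  · exact absurd h1.1 hi'
  · exact absurd h1.1 hj'

lemma walk_pathM_bounds : ∀ (k : ℕ) (u v : Fin n), 0 < (pathM hN ^ k) u v →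
    Nat.dist (u : ℕ) (v : ℕ) ≤ k ∧ (k + (u : ℕ) + (v : ℕ)) % 2 = 0 := by
  intro k
  induction k with
  | zero =>
    intro u v h
    rw [pow_zero, Matrix.one_apply] at h
    have huv : u = v := by by_contra hc; rw [if_neg hc] at h; exact lt_irrefl 0 h
    subst huv
    constructor
    · simp [Nat.dist]
    · omega
  | succ k ih =>
    intro u v h
    obtain ⟨w, hw, hwalk⟩ := walk_step (pathM_nonneg hN) h
    have hd := pathM_step_dist hN hw
    obtain ⟨ih1, ih2⟩ := ih w v hwalk
    simp [Nat.dist] at hd ih1 ih2 ⊢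
    omega

lemma walk_pathM_to_hub {k : ℕ} {x : Fin n} (h : 0 < (pathM hN ^ k) x (hub hN)) :
    k = 0 ∧ x = hub hN := by
  cases k with
  | zero =>
    rw [pow_zero, Matrix.one_apply] at h
    refine ⟨rfl, ?_⟩
    by_contra hc; rw [if_neg hc] at h; exact lt_irrefl 0 h
  | succ k =>
    obtain ⟨w, hw1, hw2⟩ := walk_step_right (pathM_nonneg hN) h
    obtain ⟨_, hj, _⟩ := pathM_pos hN hw2
    exact absurd rfl hj

/-- `SPT j` : `j` is a non-hub neighbour of the hub. -/
def SPT (hN : Nice n A) (j : Fin n) : Prop := j ≠ hub hN ∧ 0 < A j (hub hN)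

lemma first_split : ∀ (k : ℕ) (u v : Fin n), 0 < (A ^ k) u v → u ≠ hub hN →
    0 < (pathM hN ^ k) u v ∨
    ∃ (j : Fin n) (p q : ℕ), SPT hN j ∧ p + 1 + q = k ∧
      0 < (pathM hN ^ p) u j ∧ 0 < (A ^ q) (hub hN) v := by
  intro k
  induction k with
  | zero =>
    intro u v h hu
    left
    rw [pow_zero] at h ⊢
    exact h
  | succ k ih =>
    intro u v h hu
    obtain ⟨w, hw, hwalk⟩ := walk_step hN.nonneg h
    rcases em (w = hub hN) with hwh | hwh
    · right
      refine ⟨u, 0, k, ⟨hu, by rwa [hwh] at hw⟩, by omega, ?_, by rwa [hwh] at hwalk⟩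
      rw [pow_zero, Matrix.one_apply_eq]; norm_num
    · rcases ih w v hwalk hwh with hL | ⟨j, p, q, hspt, hsum, hB, hA2⟩
      · left
        exact walk_cons (pathM_nonneg hN) (pathM_pos_of hN hu hwh hw) hL
      · right
        exact ⟨j, p + 1, q, hspt, by omega,
          walk_cons (pathM_nonneg hN) (pathM_pos_of hN hu hwh hw) hB, hA2⟩

lemma walk_symm {k : ℕ} {u v : Fin n} (h : 0 < (A ^ k) u v) : 0 < (A ^ k) v u := by
  rwa [pow_symm hN.symm]

lemma last_split {q : ℕ} {v : Fin n} (h : 0 < (A ^ q) (hub hN) v) (hv : v ≠ hub hN) :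
    ∃ (w : Fin n) (p μ : ℕ), SPT hN w ∧ p + 1 + μ = q ∧
      0 < (pathM hN ^ p) v w ∧ 0 < (A ^ μ) (hub hN) (hub hN) := by
  have h' : 0 < (A ^ q) v (hub hN) := walk_symm hN h
  rcases first_split hN q v (hub hN) h' hv with hL | ⟨j, p, μ, hspt, hsum, hB, hA2⟩
  · exact absurd (walk_pathM_to_hub hN hL).2 hv
  · exact ⟨j, p, μ, hspt, hsum, hB, by
      obtain ⟨hj, hjA⟩ := hspt
      -- hA2 : 0 < (A ^ μ) (hub) (hub) already
      exact hA2⟩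

/-- Full decomposition of a walk between two non-hub vertices. -/
lemma full_decomp {k : ℕ} {u v : Fin n} (hu : u ≠ hub hN) (hv : v ≠ hub hN)
    (h : 0 < (A ^ k) u v) :
    (Nat.dist (u : ℕ) (v : ℕ) ≤ k ∧ (k + (u : ℕ) + (v : ℕ)) % 2 = 0) ∨
    ∃ (j w : Fin n) (p μ q : ℕ), SPT hN j ∧ SPT hN w ∧ k = p + 1 + μ + 1 + q ∧
      Nat.dist (u : ℕ) (j : ℕ) ≤ p ∧ (p + (u : ℕ) + (j : ℕ)) % 2 = 0 ∧
      Nat.dist (w : ℕ) (v : ℕ) ≤ q ∧ (q + (w : ℕ) + (v : ℕ)) % 2 = 0 ∧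
      0 < (A ^ μ) (hub hN) (hub hN) := by
  rcases first_split hN k u v h hu with hL | ⟨j, p, q', hspt, hsum, hB, hA2⟩
  · left; exact walk_pathM_bounds hN k u v hL
  · right
    obtain ⟨w, p', μ, hsptw, hsum', hB', hμ⟩ := last_split hN hA2 hv
    obtain ⟨hd1, hp1⟩ := walk_pathM_bounds hN p u j hB
    obtain ⟨hd2, hp2⟩ := walk_pathM_bounds hN p' v w hB'
    refine ⟨j, w, p, μ, p', hspt, hsptw, by omega, hd1, hp1, ?_, ?_, hμ⟩
    · rwa [Nat.dist_comm] at hd2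
    · omega

/-- decomposition of a walk from a non-hub vertex to the hub. -/
lemma hub_decomp {k : ℕ} {u : Fin n} (hu : u ≠ hub hN)
    (h : 0 < (A ^ k) u (hub hN)) :
    ∃ (j : Fin n) (p μ : ℕ), SPT hN j ∧ k = p + 1 + μ ∧
      Nat.dist (u : ℕ) (j : ℕ) ≤ p ∧ (p + (u : ℕ) + (j : ℕ)) % 2 = 0 ∧
      0 < (A ^ μ) (hub hN) (hub hN) := by
  rcases first_split hN k u (hub hN) h hu with hL | ⟨j, p, q', hspt, hsum, hB, hA2⟩
  · exact absurd (walk_pathM_to_hub hN hL).2 hu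
  · obtain ⟨hd1, hp1⟩ := walk_pathM_bounds hN p u j hB
    exact ⟨j, p, q', hspt, by omega, hd1, hp1, hA2⟩

/-- Construction: walk through the hub. -/
lemma hub_route {u v j w : Fin n} (hj : SPT hN j) (hw : SPT hN w) {μ : ℕ}
    (hμ : 0 < (A ^ μ) (hub hN) (hub hN)) :
    0 < (A ^ (Nat.dist (u : ℕ) (j : ℕ) + 1 + μ + 1 + Nat.dist (w : ℕ) (v : ℕ))) u v := by
  have h1 : 0 < (A ^ (Nat.dist (u : ℕ) (j : ℕ))) u j := walk_path hN u j
  have h2 : 0 < A j (hub hN) := hj.2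
  have h3 : 0 < A (hub hN) w := by rw [hN.symm]; exact hw.2
  have h4 : 0 < (A ^ (Nat.dist (w : ℕ) (v : ℕ))) w v := walk_path hN w v
  have c1 := walk_snoc hN.nonneg h1 h2
  have c2 := walk_concat hN.nonneg c1 hμ
  have c3 := walk_snoc hN.nonneg c2 h3
  have c4 := walk_concat hN.nonneg c3 h4
  exact c4

lemma hub_route_to {u j : Fin n} (hj : SPT hN j) {μ : ℕ}
    (hμ : 0 < (A ^ μ) (hub hN) (hub hN)) :
    0 < (A ^ (Nat.dist (u : ℕ) (j : ℕ) + 1 + μ)) u (hub hN) := by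
  have h1 : 0 < (A ^ (Nat.dist (u : ℕ) (j : ℕ))) u j := walk_path hN u j
  have c1 := walk_snoc hN.nonneg h1 hj.2
  exact walk_concat hN.nonneg c1 hμ

omit hN in
lemma walk_zero (u : Fin n) : 0 < (A ^ 0) u u := by
  rw [pow_zero, Matrix.one_apply_eq]; norm_num

end Nice
end PSCaux

namespace PSCaux
variable {n : ℕ} {A : Matrix (Fin n) (Fin n) ℝ}
section Nice2
variable (hN : Nice n A)
include hN

lemma edge_parity_all_flip (hall : ∀ j, SPT hN j → ((j : ℕ) + n) % 2 = 0)
    {i j : Fin n} (h : 0 < A i j) : ((i : ℕ) + (j : ℕ) + 1) % 2 = 0 := by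
  have hnn := hN.hn
  rcases hN.struct i j h with h1 | h1 | ⟨h1, h2⟩ | ⟨h1, h2⟩
  · omega
  · omega
  · have hj : SPT hN j := by
      refine ⟨fun hc => by simp [hub, Fin.ext_iff] at hc; omega, ?_⟩
      have : (hub hN : Fin n) = i := Fin.ext (by simp [hub_val, h1])
      rw [this, hN.symm]; exact h
    have := hall j hj
    omega
  · have hi : SPT hN i := by
      refine ⟨fun hc => by simp [hub, Fin.ext_iff] at hc; omega, ?_⟩
      have : (hub hN : Fin n) = j := Fin.ext (by simp [hub_val, h1])
      rw [this]; exact h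
    have := hall i hi
    omega

lemma parity_invariant (hall : ∀ j, SPT hN j → ((j : ℕ) + n) % 2 = 0) :
    ∀ (k : ℕ) (u v : Fin n), 0 < (A ^ k) u v → (k + (u : ℕ) + (v : ℕ)) % 2 = 0 := by
  intro k
  induction k with
  | zero =>
    intro u v h
    rw [pow_zero, Matrix.one_apply] at h
    have huv : u = v := by by_contra hc; rw [if_neg hc] at h; exact lt_irrefl 0 h
    subst huv; omega
  | succ k ih =>
    intro u v h
    obtain ⟨w, hw, hwalk⟩ := walk_step hN.nonneg h
    have h1 := edge_parity_all_flip hN hall hw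
    have h2 := ih w v hwalk
    omega

lemma exists_odd_chord {g : ℕ} (hg : g % 2 = 1)
    (hgw : 0 < (A ^ g) (hub hN) (hub hN)) :
    ∃ c : Fin n, SPT hN c ∧ ((c : ℕ) + n) % 2 = 1 := by
  by_contra hc
  push_neg at hc
  have hall : ∀ j, SPT hN j → ((j : ℕ) + n) % 2 = 0 := by
    intro j hj
    have := hc j hj
    omega
  have := parity_invariant hN hall g _ _ hgw
  rw [hub_val] at this
  have hnn := hN.hn
  omega

lemma route_W1 (c u v : Fin n) (hc : SPT hN c) :
    0 < (A ^ (Nat.dist (u : ℕ) (c : ℕ) + Nat.dist (c : ℕ) (n - 1) + 1 +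
      Nat.dist (c : ℕ) (v : ℕ))) u v := by
  have hcd : Nat.dist (c : ℕ) (n - 1) = Nat.dist ((c : ℕ)) ((hub hN : ℕ)) := by
    rw [hub_val]
  rw [hcd]
  have c1 := walk_concat hN.nonneg (walk_path hN u c) (walk_path hN c (hub hN))
  have hchord : 0 < A (hub hN) c := by rw [hN.symm]; exact hc.2
  have c2 := walk_snoc hN.nonneg c1 hchord
  exact walk_concat hN.nonneg c2 (walk_path hN c v)

lemma route_W2 (c u v : Fin n) (hc : SPT hN c) :
    0 < (A ^ (Nat.dist (u : ℕ) (c : ℕ) + 1 + Nat.dist (n - 1) (v : ℕ))) u v := by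
  have c1 := walk_snoc hN.nonneg (walk_path hN u c) hc.2
  have c2 := walk_concat hN.nonneg c1 (walk_path hN (hub hN) v)
  have : Nat.dist ((hub hN : ℕ)) ((v : ℕ)) = Nat.dist (n - 1) (v : ℕ) := by rw [hub_val]
  rwa [this] at c2

lemma route_W2' (c u v : Fin n) (hc : SPT hN c) :
    0 < (A ^ (Nat.dist (u : ℕ) (n - 1) + 1 + Nat.dist (c : ℕ) (v : ℕ))) u v := by
  have hchord : 0 < A (hub hN) c := by rw [hN.symm]; exact hc.2
  have c1 := walk_snoc hN.nonneg (walk_path hN u (hub hN)) hchord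
  have c2 := walk_concat hN.nonneg c1 (walk_path hN c v)
  have : Nat.dist ((u : ℕ)) ((hub hN : ℕ)) = Nat.dist (u : ℕ) (n - 1) := by rw [hub_val]
  rwa [this] at c2

lemma allpos_2n4 (c : Fin n) (hc : SPT hN c) (hcp : ((c : ℕ) + n) % 2 = 1)
    (u v : Fin n) : 0 < (A ^ (2 * n - 4)) u v := by
  have hnn := hN.hn
  have hcv : (c : ℕ) ≤ n - 2 := by
    have h1 : (c : ℕ) < n := c.isLt
    have h2 : (c : ℕ) ≠ n - 1 := fun hcc => hc.1 (Fin.ext (by rw [hub_val, hcc]))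
    omega
  have hcv3 : (c : ℕ) ≤ n - 3 := by omega
  have hu := u.isLt
  have hv := v.isLt
  rcases Nat.mod_two_eq_zero_or_one ((u : ℕ) + (v : ℕ)) with hpar | hpar
  · exact walk_pad hN (walk_path hN u v)
      (by have := nat_dist_parity (u : ℕ) (v : ℕ); simp [Nat.dist] at *; omega)
      (by have := nat_dist_parity (u : ℕ) (v : ℕ); simp [Nat.dist] at *; omega)
  · rcases le_or_gt (u : ℕ) (c : ℕ) with hu1 | hu1 <;>
      rcases le_or_gt (v : ℕ) (c : ℕ) with hv1 | hv1
    · -- both below c : around-the-cycle route W1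
      exact walk_pad hN (route_W1 hN c u v hc)
        (by simp [Nat.dist] at *; omega) (by simp [Nat.dist] at *; omega)
    · exact walk_pad hN (route_W2 hN c u v hc)
        (by simp [Nat.dist] at *; omega) (by simp [Nat.dist] at *; omega)
    · exact walk_pad hN (route_W2' hN c u v hc)
        (by simp [Nat.dist] at *; omega) (by simp [Nat.dist] at *; omega)
    · rcases le_or_gt (u : ℕ) (v : ℕ) with huv | huv
      · exact walk_pad hN (route_W2 hN c u v hc)
          (by simp [Nat.dist] at *; omega) (by simp [Nat.dist] at *; omega)
      · exact walk_pad hN (route_W2' hN c u v hc)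
          (by simp [Nat.dist] at *; omega) (by simp [Nat.dist] at *; omega)

lemma allpos_succ {k : ℕ} (h : ∀ u v : Fin n, 0 < (A ^ k) u v) :
    ∀ u v : Fin n, 0 < (A ^ (k + 1)) u v := by
  intro u v
  obtain ⟨w, hw⟩ := exists_nbr hN u
  exact walk_cons hN.nonneg hw (h w v)

end Nice2
end PSCaux

namespace PSCaux

set_option maxHeartbeats 2000000 in
lemma AL_main (e g u v j1 w1 j2 w2 a1 b1 a2 b2 p1 q1 m1 p2 q2 m2 : ℕ)
    (he : e % 2 = 1) (hg : g % 2 = 1)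
    (ha1 : (a1 + u + j1) % 2 = 0) (hb1 : (b1 + u + w1) % 2 = 0)
    (ha2 : (a2 + v + j2) % 2 = 0) (hb2 : (b2 + v + w2) % 2 = 0)
    (hd1 : e = p1 + 1 + m1 + 1 + q1) (hp1 : a1 ≤ p1) (hq1 : b1 ≤ q1)
    (hp1p : (p1 + u + j1) % 2 = 0) (hq1p : (q1 + w1 + u) % 2 = 0)
    (hm1 : m1 % 2 = 0 ∨ g ≤ m1)
    (hd2 : e = p2 + 1 + m2 + 1 + q2) (hp2 : a2 ≤ p2) (hq2 : b2 ≤ q2)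
    (hp2p : (p2 + v + j2) % 2 = 0) (hq2p : (q2 + w2 + v) % 2 = 0)
    (hm2 : m2 % 2 = 0 ∨ g ≤ m2)
    (hc11 : ((a1+a2) % 2 = 0 ∧ e ≤ a1+a2+2) ∨ ((a1+a2) % 2 = 1 ∧ e ≤ a1+a2+2+g))
    (hc12 : ((a1+b2) % 2 = 0 ∧ e ≤ a1+b2+2) ∨ ((a1+b2) % 2 = 1 ∧ e ≤ a1+b2+2+g))
    (hc21 : ((b1+a2) % 2 = 0 ∧ e ≤ b1+a2+2) ∨ ((b1+a2) % 2 = 1 ∧ e ≤ b1+a2+2+g))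
    (hc22 : ((b1+b2) % 2 = 0 ∧ e ≤ b1+b2+2) ∨ ((b1+b2) % 2 = 1 ∧ e ≤ b1+b2+2+g)) :
    False := by
  rcases hm1 with hm1|hm1 <;> rcases hm2 with hm2|hm2 <;>
  rcases hc11 with ⟨h11p,h11⟩|⟨h11p,h11⟩ <;> rcases hc12 with ⟨h12p,h12⟩|⟨h12p,h12⟩ <;>
  rcases hc21 with ⟨h21p,h21⟩|⟨h21p,h21⟩ <;> rcases hc22 with ⟨h22p,h22⟩|⟨h22p,h22⟩ <;>
  omega

set_option maxHeartbeats 1000000 in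
lemma AL_hub (e g u j1 w1 a1 b1 p1 q1 m1 : ℕ)
    (he : e % 2 = 1) (hg : g % 2 = 1)
    (ha1 : (a1 + u + j1) % 2 = 0) (hb1 : (b1 + u + w1) % 2 = 0)
    (hd1 : e = p1 + 1 + m1 + 1 + q1) (hp1 : a1 ≤ p1) (hq1 : b1 ≤ q1)
    (hp1p : (p1 + u + j1) % 2 = 0) (hq1p : (q1 + w1 + u) % 2 = 0)
    (hm1 : m1 % 2 = 0 ∨ g ≤ m1)
    (hc1 : ((a1+1) % 2 = 0 ∧ e ≤ a1+1) ∨ ((a1+1) % 2 = 1 ∧ e ≤ a1+1+g))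
    (hc2 : ((b1+1) % 2 = 0 ∧ e ≤ b1+1) ∨ ((b1+1) % 2 = 1 ∧ e ≤ b1+1+g)) :
    False := by
  rcases hm1 with hm1|hm1 <;> rcases hc1 with ⟨h1p,h1⟩|⟨h1p,h1⟩ <;>
  rcases hc2 with ⟨h2p,h2⟩|⟨h2p,h2⟩ <;> omega

section Interface
variable {n : ℕ} (hn : 4 ≤ n) (hpos : 0 < n) {A : Matrix (Fin n) (Fin n) ℝ}
include hn

lemma nice_of_mem (hmem : A ∈ companionClass n hpos 0 0) :
    Nice n A ∧ (∀ j : Fin n, 0 < A ⟨0, hpos⟩ j → (j : ℕ) = 1) := by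
  obtain ⟨C, hC, ha, he, hAeq⟩ := hmem
  subst hAeq
  have hrow : ∀ i j : Fin n, (i : ℕ) + 1 < n → C i j = if (j : ℕ) = (i : ℕ) + 1 then 1 else 0 := by
    intro i j hi
    have := hC i j
    rwa [if_pos hi] at this
  have hlast : ∀ i j : Fin n, ¬ ((i : ℕ) + 1 < n) → C i j = 0 ∨ C i j = 1 := by
    intro i j hi
    have := hC i j
    rwa [if_neg hi] at this
  have hCnn : ∀ i j, 0 ≤ C i j := by
    intro i j
    rcases Nat.lt_or_ge ((i : ℕ) + 1) n with h | h
    · rw [hrow i j h]; split <;> norm_num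
    · rcases hlast i j (by omega) with h' | h' <;> rw [h'] <;> norm_num
  have hApp : ∀ i j, (C + C.transpose) i j = C i j + C j i := by
    intro i j
    simp [Matrix.add_apply, Matrix.transpose_apply]
  have hCpos : ∀ i j : Fin n, 0 < C i j → ((j : ℕ) = (i : ℕ) + 1 ∨ ((i : ℕ) = n - 1 ∧ (j : ℕ) < n - 1)) := by
    intro i j hij
    rcases Nat.lt_or_ge ((i : ℕ) + 1) n with h | h
    · left
      rw [hrow i j h] at hij
      by_contra hc
      rw [if_neg hc] at hij
      exact lt_irrefl 0 hij
    · right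
      have hi : (i : ℕ) = n - 1 := by have := i.isLt; omega
      refine ⟨hi, ?_⟩
      by_contra hc
      have hj : (j : ℕ) = n - 1 := by have := j.isLt; omega
      have hieq : i = (⟨n - 1, by omega⟩ : Fin n) := Fin.ext hi
      have hjeq : j = (⟨n - 1, by omega⟩ : Fin n) := Fin.ext hj
      rw [hieq, hjeq] at hij
      rw [he] at hij
      exact lt_irrefl 0 hij
  constructor
  · refine ⟨hn, ?_, ?_, ?_, ?_⟩
    · intro i j; rw [hApp]; exact add_nonneg (hCnn i j) (hCnn j i)
    · intro i j; rw [hApp, hApp]; ring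
    · intro i j hij
      rw [hApp]
      have h1 : C i j = 1 := by
        rw [hrow i j (by have := j.isLt; omega)]
        rw [if_pos hij.symm]
      rw [h1]
      have := hCnn j i
      linarith
    · intro i j hij
      rw [hApp] at hij
      have : 0 < C i j ∨ 0 < C j i := by
        by_contra hc
        push_neg at hc
        have h1 : C i j = 0 := le_antisymm hc.1 (hCnn i j)
        have h2 : C j i = 0 := le_antisymm hc.2 (hCnn j i)
        rw [h1, h2] at hij
        norm_num at hij
      rcases this with h | h
      · rcases hCpos i j h with h' | h'
        · exact Or.inl h'
        · exact Or.inr (Or.inr (Or.inl h'))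
      · rcases hCpos j i h with h' | h'
        · exact Or.inr (Or.inl h')
        · exact Or.inr (Or.inr (Or.inr h'))
  · intro j hj
    rw [hApp] at hj
    have hC0j : C ⟨0, hpos⟩ j = if (j : ℕ) = 1 then 1 else 0 := by
      have := hrow ⟨0, hpos⟩ j (by simp only [Fin.val_mk]; omega)
      simpa using this
    have hCj0 : C j ⟨0, hpos⟩ = 0 := by
      rcases Nat.lt_or_ge ((j : ℕ) + 1) n with h | h
      · rw [hrow j _ h]
        rw [if_neg (by simp)]
      · have hjv : (j : ℕ) = n - 1 := by have := j.isLt; omega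
        have hjeq : j = (⟨n - 1, by omega⟩ : Fin n) := Fin.ext hjv
        rw [hjeq]
        exact ha
    rw [hC0j, hCj0, add_zero] at hj
    by_contra hc
    rw [if_neg hc] at hj
    exact lt_irrefl 0 hj

end Interface
end PSCaux

namespace PSCaux
section Forward
variable {n : ℕ}

theorem forward_exp (hn : 4 ≤ n) (hpos : 0 < n) {A : Matrix (Fin n) (Fin n) ℝ}
    (hmem : A ∈ companionClass n hpos 0 0) (hprim : IsPrimitive A) {e : ℕ}
    (hexp : ExpIs A e) : ∃ t : ℕ, 2 ≤ t ∧ t ≤ n - 2 ∧ e = 2 * t := by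
  obtain ⟨hN, hpend⟩ := nice_of_mem hn hpos hmem
  obtain ⟨⟨hepos, heall⟩, hleast⟩ := hexp
  obtain ⟨_, k0, hk0pos, hk0⟩ := hprim
  -- existence of an odd closed walk at the hub
  have hex : ∃ m, m % 2 = 1 ∧ 0 < (A ^ m) (hub hN) (hub hN) := by
    rcases Nat.mod_two_eq_zero_or_one k0 with hpar | hpar
    · exact ⟨k0 + 1, by omega, allpos_succ hN hk0 _ _⟩
    · exact ⟨k0, hpar, hk0 _ _⟩
  set g := Nat.find hex with hgdef
  obtain ⟨hg1, hgw⟩ := Nat.find_spec hex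
  have hgmin : ∀ μ, μ % 2 = 1 → 0 < (A ^ μ) (hub hN) (hub hN) → g ≤ μ :=
    fun μ h1 h2 => Nat.find_min' hex ⟨h1, h2⟩
  -- odd chord
  obtain ⟨c, hc, hcp⟩ := exists_odd_chord hN hg1 hgw
  -- e ≤ 2n - 4
  have he_le : e ≤ 2 * n - 4 :=
    hleast ⟨by omega, allpos_2n4 hN c hc hcp⟩
  -- no diagonal
  have hnodiag : ∀ x : Fin n, ¬ 0 < A x x := by
    intro x hx
    rcases hN.struct x x hx with h | h | ⟨h1, h2⟩ | ⟨h1, h2⟩ <;> omega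
  have z0lt : (0 : ℕ) < n := hpos
  have z1lt : (1 : ℕ) < n := by omega
  set z0 : Fin n := ⟨0, z0lt⟩ with hz0
  set z1 : Fin n := ⟨1, z1lt⟩ with hz1
  -- e ≠ 1
  have hne1 : e ≠ 1 := by
    intro h
    subst h
    have := heall z0 z0
    rw [pow_one] at this
    exact hnodiag z0 this
  -- e ≠ 2
  have hne2 : e ≠ 2 := by
    intro h
    subst h
    obtain ⟨w, hw1, hw2⟩ := walk_step hN.nonneg (heall z0 z1)
    have hweq : w = z1 := Fin.ext (hpend w hw1)
    rw [pow_one, hweq] at hw2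
    exact hnodiag z1 hw2
  -- e ≠ 3
  have hne3 : e ≠ 3 := by
    intro h
    subst h
    obtain ⟨w, hw1, hw2⟩ := walk_step hN.nonneg (heall z0 z0)
    have hweq : w = z1 := Fin.ext (hpend w hw1)
    rw [hweq] at hw2
    obtain ⟨x, hx1, hx2⟩ := walk_step hN.nonneg hw2
    rw [pow_one] at hx2
    have hx0 : 0 < A z0 x := by rw [hN.symm]; exact hx2
    have hxeq : x = z1 := Fin.ext (hpend x hx0)
    rw [hxeq] at hx1
    exact hnodiag z1 hx1
  have he4 : 4 ≤ e := by omega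
  -- evenness
  have heven : e % 2 = 0 := by
    by_contra hodd
    have he2 : e % 2 = 1 := by omega
    -- e - 1 fails somewhere
    have hnot : ¬ (0 < e - 1 ∧ ∀ u v : Fin n, 0 < (A ^ (e - 1)) u v) := by
      intro hmem'
      exact absurd (hleast hmem') (by omega)
    push_neg at hnot
    obtain ⟨u, v, huv⟩ := hnot (by omega)
    have noWalk : ∀ ℓ, ℓ ≤ e - 1 → (e - 1 - ℓ) % 2 = 0 → ¬ 0 < (A ^ ℓ) u v :=
      fun ℓ h1 h2 hW => absurd (walk_pad hN hW h1 h2) (not_lt.2 huv)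
    -- u ≠ v
    have hune : u ≠ v := by
      intro h
      subst h
      exact noWalk 0 (by omega) (by omega) (walk_zero u)
    -- decomposition of the odd closed walk of length e at a non-hub vertex x
    have decomp : ∀ x : Fin n, x ≠ hub hN →
        ∃ (j w : Fin n) (p μ q : ℕ), SPT hN j ∧ SPT hN w ∧ e = p + 1 + μ + 1 + q ∧
          Nat.dist (x : ℕ) (j : ℕ) ≤ p ∧ (p + (x : ℕ) + (j : ℕ)) % 2 = 0 ∧
          Nat.dist (x : ℕ) (w : ℕ) ≤ q ∧ (q + (w : ℕ) + (x : ℕ)) % 2 = 0 ∧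
          (μ % 2 = 0 ∨ g ≤ μ) := by
      intro x hx
      rcases full_decomp hN hx hx (heall x x) with ⟨_, hpar⟩ | hdec
      · omega
      · obtain ⟨j, w, p, μ, q, hj, hw, hsum, hd1, hp1, hd2, hp2, hμ⟩ := hdec
        refine ⟨j, w, p, μ, q, hj, hw, hsum, hd1, hp1, by rwa [Nat.dist_comm], hp2, ?_⟩
        rcases Nat.mod_two_eq_zero_or_one μ with h | h
        · exact Or.inl h
        · exact Or.inr (hgmin μ h hμ)
    rcases em (u = hub hN) with huh | huh
    · -- u is the hub; work with v
      have hvh : v ≠ hub hN := fun h => hune (by rw [huh, h])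
      have noWalkH : ∀ ℓ, ℓ ≤ e - 1 → (e - 1 - ℓ) % 2 = 0 → ¬ 0 < (A ^ ℓ) v (hub hN) := by
        intro ℓ h1 h2 hW
        exact noWalk ℓ h1 h2 (by rw [huh]; exact walk_symm hN hW)
      obtain ⟨j1, w1, p1, μ1, q1, hj1, hw1, hsum1, hd11, hp11, hd12, hp12, hm1⟩ :=
        decomp v hvh
      have key : ∀ x : Fin n, SPT hN x →
          ((Nat.dist (v : ℕ) (x : ℕ) + 1) % 2 = 0 ∧ e ≤ Nat.dist (v : ℕ) (x : ℕ) + 1) ∨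
          ((Nat.dist (v : ℕ) (x : ℕ) + 1) % 2 = 1 ∧ e ≤ Nat.dist (v : ℕ) (x : ℕ) + 1 + g) := by
        intro x hx
        rcases Nat.mod_two_eq_zero_or_one (Nat.dist (v : ℕ) (x : ℕ) + 1) with h | h
        · refine Or.inl ⟨h, ?_⟩
          by_contra hlt
          push_neg at hlt
          have w0 := hub_route_to hN (u := v) hx (μ := 0) (walk_zero (hub hN))
          have w0' : 0 < (A ^ (Nat.dist (v : ℕ) (x : ℕ) + 1)) v (hub hN) := by
            simpa using w0
          exact noWalkH _ (by omega) (by omega) w0'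
        · refine Or.inr ⟨h, ?_⟩
          by_contra hlt
          push_neg at hlt
          have w0 := hub_route_to hN (u := v) hx (μ := g) hgw
          exact noWalkH _ (by omega) (by omega) w0
      exact AL_hub e g (v : ℕ) (j1 : ℕ) (w1 : ℕ)
        (Nat.dist (v : ℕ) (j1 : ℕ)) (Nat.dist (v : ℕ) (w1 : ℕ)) p1 q1 μ1
        he2 hg1 (nat_dist_parity _ _) (nat_dist_parity _ _)
        hsum1 hd11 hd12 hp11 hp12 hm1 (key j1 hj1) (key w1 hw1)
    · rcases em (v = hub hN) with hvh | hvh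
      · -- v is the hub; work with u
        have noWalkH : ∀ ℓ, ℓ ≤ e - 1 → (e - 1 - ℓ) % 2 = 0 → ¬ 0 < (A ^ ℓ) u (hub hN) := by
          intro ℓ h1 h2 hW
          exact noWalk ℓ h1 h2 (by rw [hvh]; exact hW)
        obtain ⟨j1, w1, p1, μ1, q1, hj1, hw1, hsum1, hd11, hp11, hd12, hp12, hm1⟩ :=
          decomp u huh
        have key : ∀ x : Fin n, SPT hN x →
            ((Nat.dist (u : ℕ) (x : ℕ) + 1) % 2 = 0 ∧ e ≤ Nat.dist (u : ℕ) (x : ℕ) + 1) ∨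
            ((Nat.dist (u : ℕ) (x : ℕ) + 1) % 2 = 1 ∧ e ≤ Nat.dist (u : ℕ) (x : ℕ) + 1 + g) := by
          intro x hx
          rcases Nat.mod_two_eq_zero_or_one (Nat.dist (u : ℕ) (x : ℕ) + 1) with h | h
          · refine Or.inl ⟨h, ?_⟩
            by_contra hlt
            push_neg at hlt
            have w0 := hub_route_to hN (u := u) hx (μ := 0) (walk_zero (hub hN))
            have w0' : 0 < (A ^ (Nat.dist (u : ℕ) (x : ℕ) + 1)) u (hub hN) := by
              simpa using w0
            exact noWalkH _ (by omega) (by omega) w0'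
          · refine Or.inr ⟨h, ?_⟩
            by_contra hlt
            push_neg at hlt
            have w0 := hub_route_to hN (u := u) hx (μ := g) hgw
            exact noWalkH _ (by omega) (by omega) w0
        exact AL_hub e g (u : ℕ) (j1 : ℕ) (w1 : ℕ)
          (Nat.dist (u : ℕ) (j1 : ℕ)) (Nat.dist (u : ℕ) (w1 : ℕ)) p1 q1 μ1
          he2 hg1 (nat_dist_parity _ _) (nat_dist_parity _ _)
          hsum1 hd11 hd12 hp11 hp12 hm1 (key j1 hj1) (key w1 hw1)
      · -- main case : both non-hub
        obtain ⟨j1, w1, p1, μ1, q1, hj1, hw1, hsum1, hd11, hp11, hd12, hp12, hm1⟩ :=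
          decomp u huh
        obtain ⟨j2, w2, p2, μ2, q2, hj2, hw2, hsum2, hd21, hp21, hd22, hp22, hm2⟩ :=
          decomp v hvh
        have key : ∀ x y : Fin n, SPT hN x → SPT hN y →
            ((Nat.dist (u : ℕ) (x : ℕ) + Nat.dist (v : ℕ) (y : ℕ)) % 2 = 0 ∧
              e ≤ Nat.dist (u : ℕ) (x : ℕ) + Nat.dist (v : ℕ) (y : ℕ) + 2) ∨
            ((Nat.dist (u : ℕ) (x : ℕ) + Nat.dist (v : ℕ) (y : ℕ)) % 2 = 1 ∧
              e ≤ Nat.dist (u : ℕ) (x : ℕ) + Nat.dist (v : ℕ) (y : ℕ) + 2 + g) := by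
          intro x y hx hy
          have hcomm : Nat.dist (y : ℕ) (v : ℕ) = Nat.dist (v : ℕ) (y : ℕ) := Nat.dist_comm _ _
          rcases Nat.mod_two_eq_zero_or_one
            (Nat.dist (u : ℕ) (x : ℕ) + Nat.dist (v : ℕ) (y : ℕ)) with h | h
          · refine Or.inl ⟨h, ?_⟩
            by_contra hlt
            push_neg at hlt
            have w0 := hub_route hN (u := u) (v := v) hx hy (μ := 0) (walk_zero (hub hN))
            rw [hcomm] at w0
            exact noWalk _ (by omega) (by omega) w0
          · refine Or.inr ⟨h, ?_⟩
            by_contra hlt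
            push_neg at hlt
            have w0 := hub_route hN (u := u) (v := v) hx hy (μ := g) hgw
            rw [hcomm] at w0
            exact noWalk _ (by omega) (by omega) w0
        exact AL_main e g (u : ℕ) (v : ℕ) (j1 : ℕ) (w1 : ℕ) (j2 : ℕ) (w2 : ℕ)
          (Nat.dist (u : ℕ) (j1 : ℕ)) (Nat.dist (u : ℕ) (w1 : ℕ))
          (Nat.dist (v : ℕ) (j2 : ℕ)) (Nat.dist (v : ℕ) (w2 : ℕ))
          p1 q1 μ1 p2 q2 μ2
          he2 hg1 (nat_dist_parity _ _) (nat_dist_parity _ _)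
          (nat_dist_parity _ _) (nat_dist_parity _ _)
          hsum1 hd11 hd12 hp11 hp12 hm1
          hsum2 hd21 hd22 hp21 hp22 hm2
          (key j1 j2 hj1 hj2) (key j1 w2 hj1 hw2) (key w1 j2 hw1 hj2) (key w1 w2 hw1 hw2)
  exact ⟨e / 2, by omega, by omega, by omega⟩

end Forward
end PSCaux

namespace PSCaux
section Interval
variable {n : ℕ}

/-- the companion matrix with last row supported on `[s, n-2]`. -/
def intC (n s : ℕ) : Matrix (Fin n) (Fin n) ℝ :=
  Matrix.of fun i j =>
    if (i : ℕ) + 1 < n then (if (j : ℕ) = (i : ℕ) + 1 then 1 else 0)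
    else (if s ≤ (j : ℕ) ∧ (j : ℕ) ≤ n - 2 then 1 else 0)

def intA (n s : ℕ) : Matrix (Fin n) (Fin n) ℝ := intC n s + (intC n s).transpose

lemma intA_mem (hn : 4 ≤ n) (hpos : 0 < n) {s : ℕ} (hs1 : 1 ≤ s) :
    intA n s ∈ companionClass n hpos 0 0 := by
  refine ⟨intC n s, ?_, ?_, ?_, rfl⟩
  · intro i j
    simp only [intC, Matrix.of_apply]
    split
    · split <;> simp
    · split <;> simp
  · simp only [intC, Matrix.of_apply]
    rw [if_neg (by simp; omega)]
    rw [if_neg (by simp; omega)]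
  · simp only [intC, Matrix.of_apply]
    rw [if_neg (by simp; omega)]
    rw [if_neg (by simp; omega)]

lemma intA_hub_pos (hn : 4 ≤ n) {s : ℕ} (hs2 : s ≤ n - 3) (j : Fin n)
    (h1 : s ≤ (j : ℕ)) (h2 : (j : ℕ) ≤ n - 2) :
    0 < intA n s j ⟨n - 1, by omega⟩ := by
  have hC2 : intC n s ⟨n - 1, by omega⟩ j = 1 := by
    simp only [intC, Matrix.of_apply]
    rw [if_neg (by simp; omega), if_pos (by exact ⟨h1, h2⟩)]
  have hC1 : (0:ℝ) ≤ intC n s j ⟨n - 1, by omega⟩ := by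
    simp only [intC, Matrix.of_apply]
    split
    · split <;> simp
    · split <;> simp
  simp only [intA, Matrix.add_apply, Matrix.transpose_apply]
  rw [hC2]
  linarith

lemma intA_hub_sub (hn : 4 ≤ n) {s : ℕ} (hs1 : 1 ≤ s) (hs2 : s ≤ n - 3) (j : Fin n)
    (hj : (j : ℕ) ≠ n - 1) (h : 0 < intA n s j ⟨n - 1, by omega⟩) : s ≤ (j : ℕ) := by
  by_contra hc
  push_neg at hc
  have hjlt : (j : ℕ) < n - 1 := by have := j.isLt; omega
  have hC1 : intC n s j ⟨n - 1, by omega⟩ = 0 := by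
    simp only [intC, Matrix.of_apply]
    rw [if_pos (by omega)]
    rw [if_neg (by simp; omega)]
  have hC2 : intC n s ⟨n - 1, by omega⟩ j = 0 := by
    simp only [intC, Matrix.of_apply]
    rw [if_neg (by simp; omega)]
    rw [if_neg (by simp; omega)]
  simp only [intA, Matrix.add_apply, Matrix.transpose_apply, hC1, hC2] at h
  norm_num at h

lemma pick0 (hn : 4 ≤ n) {s : ℕ} (hs1 : 1 ≤ s) (hs2 : s ≤ n - 3) (x : ℕ) (hx : x ≤ n - 1) :
    ∃ a : ℕ, s ≤ a ∧ a ≤ n - 2 ∧ Nat.dist x a ≤ s := by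
  rcases le_or_gt x s with h | h
  · exact ⟨s, le_refl s, by omega, by simp only [Nat.dist]; omega⟩
  · rcases le_or_gt x (n - 2) with h2 | h2
    · exact ⟨x, by omega, h2, by simp only [Nat.dist]; omega⟩
    · exact ⟨n - 2, by omega, le_refl _, by simp only [Nat.dist]; omega⟩

lemma pick1 (hn : 4 ≤ n) {s : ℕ} (hs1 : 1 ≤ s) (hs2 : s ≤ n - 3) (x p : ℕ) (hx : x ≤ n - 1) :
    ∃ a : ℕ, s ≤ a ∧ a ≤ n - 2 ∧ Nat.dist x a ≤ s + 1 ∧ (Nat.dist x a + p) % 2 = 0 := by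
  rcases le_or_gt x s with h | h
  · refine ⟨if (s + x + p) % 2 = 0 then s else s + 1, ?_, ?_, ?_, ?_⟩ <;>
      (first | (split <;> omega) | (simp only [Nat.dist]; split <;> omega))
  · rcases le_or_gt x (n - 2) with h2 | h2
    · refine ⟨if (x + x + p) % 2 = 0 then x else x - 1, ?_, ?_, ?_, ?_⟩ <;>
        (first | (split <;> omega) | (simp only [Nat.dist]; split <;> omega))
    · refine ⟨if (n - 2 + x + p) % 2 = 0 then n - 2 else n - 3, ?_, ?_, ?_, ?_⟩ <;>
        (first | (split <;> omega) | (simp only [Nat.dist]; split <;> omega))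

lemma intA_allpos (hn : 4 ≤ n) (hpos : 0 < n) {s : ℕ} (hs1 : 1 ≤ s) (hs2 : s ≤ n - 3)
    (hN : Nice n (intA n s)) (u v : Fin n) : 0 < (intA n s ^ (2 * s + 2)) u v := by
  obtain ⟨a, ha1, ha2, ha3⟩ := pick0 hn hs1 hs2 (u : ℕ) (by have := u.isLt; omega)
  obtain ⟨b, hb1, hb2, hb3, hb4⟩ :=
    pick1 hn hs1 hs2 (v : ℕ) (Nat.dist (u : ℕ) a) (by have := v.isLt; omega)
  have haf : (a : ℕ) < n := by omega
  have hbf : (b : ℕ) < n := by omega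
  set af : Fin n := ⟨a, haf⟩
  set bf : Fin n := ⟨b, hbf⟩
  have hSa : SPT hN af := by
    refine ⟨fun hc => by
      have h1 := congrArg Fin.val hc; have h2 : (af : ℕ) = a := rfl; rw [hub_val] at h1; omega, ?_⟩
    exact intA_hub_pos hn hs2 af ha1 ha2
  have hSb : SPT hN bf := by
    refine ⟨fun hc => by
      have h1 := congrArg Fin.val hc; have h2 : (bf : ℕ) = b := rfl; rw [hub_val] at h1; omega, ?_⟩
    exact intA_hub_pos hn hs2 bf hb1 hb2
  have w0 := hub_route hN (u := u) (v := v) hSa hSb (μ := 0) (walk_zero (hub hN))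
  have hcomm : Nat.dist (bf : ℕ) (v : ℕ) = Nat.dist (v : ℕ) b := Nat.dist_comm _ _
  have e1 : Nat.dist (u : ℕ) (af : ℕ) = Nat.dist (u : ℕ) a := rfl
  rw [hcomm, e1] at w0
  exact walk_pad hN w0 (by omega) (by omega)

lemma intA_expIs (hn : 4 ≤ n) (hpos : 0 < n) {s : ℕ} (hs1 : 1 ≤ s) (hs2 : s ≤ n - 3) :
    IsPrimitive (intA n s) ∧ ExpIs (intA n s) (2 * s + 2) := by
  have hmem := intA_mem hn hpos hs1
  obtain ⟨hN, _⟩ := nice_of_mem hn hpos hmem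
  have hall := intA_allpos hn hpos hs1 hs2 hN
  have hprim : IsPrimitive (intA n s) := ⟨hN.nonneg, 2 * s + 2, by omega, hall⟩
  refine ⟨hprim, ⟨⟨by omega, hall⟩, ?_⟩⟩
  rintro k ⟨hkpos, hkall⟩
  by_contra hlt
  push_neg at hlt
  have hk : k ≤ 2 * s + 1 := by omega
  have z0lt : (0 : ℕ) < n := hpos
  have z1lt : (1 : ℕ) < n := by omega
  set z0 : Fin n := ⟨0, z0lt⟩
  set z1 : Fin n := ⟨1, z1lt⟩
  have hz0v : (z0 : ℕ) = 0 := rfl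
  have hz1v : (z1 : ℕ) = 1 := rfl
  have hz0h : z0 ≠ hub hN := fun hc => by
    have h1 := congrArg Fin.val hc; rw [hub_val] at h1; omega
  have hz1h : z1 ≠ hub hN := fun hc => by
    have h1 := congrArg Fin.val hc; rw [hub_val] at h1; omega
  rcases Nat.mod_two_eq_zero_or_one k with hkp | hkp
  · -- even k : look at the pair (0,1)
    rcases full_decomp hN hz0h hz1h (hkall z0 z1) with ⟨hd, hp⟩ | hdec
    · omega
    · obtain ⟨j, w, p, μ, q, hj, hw, hsum, hd1, hp1, hd2, hp2, _⟩ := hdec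
      have hjs : s ≤ (j : ℕ) := intA_hub_sub hn hs1 hs2 j
        (fun hc => hj.1 (Fin.ext (by rw [hc]; rfl))) hj.2
      have hws : s ≤ (w : ℕ) := intA_hub_sub hn hs1 hs2 w
        (fun hc => hw.1 (Fin.ext (by rw [hc]; rfl))) hw.2
      simp only [Nat.dist] at hd1 hd2
      omega
  · -- odd k : the pair (0,0)
    rcases full_decomp hN hz0h hz0h (hkall z0 z0) with ⟨hd, hp⟩ | hdec
    · omega
    · obtain ⟨j, w, p, μ, q, hj, hw, hsum, hd1, hp1, hd2, hp2, _⟩ := hdec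
      have hjs : s ≤ (j : ℕ) := intA_hub_sub hn hs1 hs2 j
        (fun hc => hj.1 (Fin.ext (by rw [hc]; rfl))) hj.2
      have hws : s ≤ (w : ℕ) := intA_hub_sub hn hs1 hs2 w
        (fun hc => hw.1 (Fin.ext (by rw [hc]; rfl))) hw.2
      simp only [Nat.dist] at hd1 hd2
      omega

end Interval
end PSCaux

namespace PSCaux
section Lollipop
variable {n : ℕ}

def lolM (n : ℕ) : Matrix (Fin n) (Fin n) ℝ :=
  Matrix.of fun i j : Fin n =>
    if (i : ℕ) + 1 = (j : ℕ) ∨ (j : ℕ) + 1 = (i : ℕ) ∨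
      ((i : ℕ) = n - 1 ∧ (j : ℕ) = n - 3) ∨
      ((i : ℕ) = n - 3 ∧ (j : ℕ) = n - 1) then (1 : ℝ) else 0

lemma lol_pos_iff (i j : Fin n) :
    0 < lolM n i j ↔ ((i : ℕ) + 1 = (j : ℕ) ∨ (j : ℕ) + 1 = (i : ℕ) ∨
      ((i : ℕ) = n - 1 ∧ (j : ℕ) = n - 3) ∨
      ((i : ℕ) = n - 3 ∧ (j : ℕ) = n - 1)) := by
  simp only [lolM, Matrix.of_apply]
  split
  case isTrue h => exact ⟨fun _ => h, fun _ => one_pos⟩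
  case isFalse h => exact ⟨fun h0 => absurd h0 (lt_irrefl 0), fun hc => absurd hc h⟩

lemma lol_nice (hn : 4 ≤ n) : Nice n (lolM n) := by
  refine ⟨hn, ?_, ?_, ?_, ?_⟩
  · intro i j
    simp only [lolM, Matrix.of_apply]
    split <;> norm_num
  · intro i j
    simp only [lolM, Matrix.of_apply]
    have hiff : ((i : ℕ) + 1 = (j : ℕ) ∨ (j : ℕ) + 1 = (i : ℕ) ∨
        ((i : ℕ) = n - 1 ∧ (j : ℕ) = n - 3) ∨ ((i : ℕ) = n - 3 ∧ (j : ℕ) = n - 1)) ↔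
        ((j : ℕ) + 1 = (i : ℕ) ∨ (i : ℕ) + 1 = (j : ℕ) ∨
        ((j : ℕ) = n - 1 ∧ (i : ℕ) = n - 3) ∨ ((j : ℕ) = n - 3 ∧ (i : ℕ) = n - 1)) := by
      tauto
    rw [if_congr hiff rfl rfl]
  · intro i j hij
    rw [lol_pos_iff]
    exact Or.inl hij
  · intro i j hij
    rw [lol_pos_iff] at hij
    have hi := i.isLt
    have hj := j.isLt
    rcases hij with h | h | ⟨h1, h2⟩ | ⟨h1, h2⟩
    · exact Or.inl h.symm
    · exact Or.inr (Or.inl h.symm)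
    · exact Or.inr (Or.inr (Or.inl ⟨h1, by omega⟩))
    · exact Or.inr (Or.inr (Or.inr ⟨h2, by omega⟩))

lemma lol_spt_vals (hn : 4 ≤ n) (hN : Nice n (lolM n)) (j : Fin n) (h : SPT hN j) :
    (j : ℕ) = n - 3 ∨ (j : ℕ) = n - 2 := by
  obtain ⟨hne, hpos⟩ := h
  rw [lol_pos_iff] at hpos
  have hj := j.isLt
  have hhv : ((hub hN : Fin n) : ℕ) = n - 1 := rfl
  rw [hhv] at hpos
  rcases hpos with h | h | ⟨h1, h2⟩ | ⟨h1, h2⟩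
  · right; omega
  · omega
  · omega
  · left; exact h1

lemma lol_nodiag (hn : 4 ≤ n) (x : Fin n) : ¬ 0 < lolM n x x := by
  intro h
  rw [lol_pos_iff] at h
  have := x.isLt
  rcases h with h | h | ⟨h1, h2⟩ | ⟨h1, h2⟩ <;> omega

theorem lol_main (hn : 4 ≤ n) : IsPrimitive (lolM n) ∧ ExpIs (lolM n) (2 * (n - 2)) := by
  have hN := lol_nice hn
  have hc3 : (n : ℕ) - 3 < n := by omega
  set c : Fin n := ⟨n - 3, hc3⟩ with hcdef
  have hcS : SPT hN c := by
    refine ⟨fun hcc => by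
      have h1 := congrArg Fin.val hcc; have h2 : (c : ℕ) = n - 3 := rfl; rw [hub_val] at h1; omega, ?_⟩
    rw [lol_pos_iff]
    exact Or.inr (Or.inr (Or.inr ⟨rfl, rfl⟩))
  have hcp : ((c : ℕ) + n) % 2 = 1 := by
    have : (c : ℕ) = n - 3 := rfl
    omega
  have h24 : 2 * (n - 2) = 2 * n - 4 := by omega
  have hall : ∀ u v : Fin n, 0 < (lolM n ^ (2 * (n - 2))) u v := by
    rw [h24]
    exact allpos_2n4 hN c hcS hcp
  refine ⟨⟨hN.nonneg, 2 * (n - 2), by omega, hall⟩, ⟨⟨by omega, hall⟩, ?_⟩⟩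
  rintro k ⟨hkpos, hkall⟩
  by_contra hlt
  push_neg at hlt
  have hk : k ≤ 2 * n - 5 := by omega
  have z0lt : (0 : ℕ) < n := by omega
  have z1lt : (1 : ℕ) < n := by omega
  set z0 : Fin n := ⟨0, z0lt⟩
  set z1 : Fin n := ⟨1, z1lt⟩
  have hz0v : (z0 : ℕ) = 0 := rfl
  have hz1v : (z1 : ℕ) = 1 := rfl
  have hz0h : z0 ≠ hub hN := fun hcc => by
    have h1 := congrArg Fin.val hcc; rw [hub_val] at h1; omega
  have hz1h : z1 ≠ hub hN := fun hcc => by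
    have h1 := congrArg Fin.val hcc; rw [hub_val] at h1; omega
  rcases Nat.mod_two_eq_zero_or_one k with hkp | hkp
  · -- even k : the pair (0,1)
    rcases full_decomp hN hz0h hz1h (hkall z0 z1) with ⟨hd, hp⟩ | hdec
    · omega
    · obtain ⟨j, w, p, μ, q, hj, hw, hsum, hd1, hp1, hd2, hp2, _⟩ := hdec
      have hjs := lol_spt_vals hn hN j hj
      have hws := lol_spt_vals hn hN w hw
      simp only [Nat.dist] at hd1 hd2
      omega
  · -- odd k : the pair (0,0)
    rcases full_decomp hN hz0h hz0h (hkall z0 z0) with ⟨hd, hp⟩ | hdec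
    · omega
    · obtain ⟨j, w, p, μ, q, hj, hw, hsum, hd1, hp1, hd2, hp2, hμ⟩ := hdec
      have hjs := lol_spt_vals hn hN j hj
      have hws := lol_spt_vals hn hN w hw
      have hμ3 : μ % 2 = 0 ∨ 3 ≤ μ := by
        rcases Nat.mod_two_eq_zero_or_one μ with h | h
        · exact Or.inl h
        · right
          have hμ1 : μ ≠ 1 := by
            intro hc1
            rw [hc1, pow_one] at hμ
            exact lol_nodiag hn (hub hN) hμ
          omega
      simp only [Nat.dist] at hd1 hd2
      omega

end Lollipop
end PSCaux

theorem expSet_PSC_zero_zero {n : ℕ} (hn : 4 ≤ n) :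
    expSet (companionClass n (by omega) 0 0) =
        {e : ℕ | ∃ t : ℕ, 2 ≤ t ∧ t ≤ n - 2 ∧ e = 2 * t} ∧
      (∀ L : Matrix (Fin n) (Fin n) ℝ,
        (L = Matrix.of fun i j : Fin n =>
          if (i : ℕ) + 1 = (j : ℕ) ∨ (j : ℕ) + 1 = (i : ℕ) ∨
            ((i : ℕ) = n - 1 ∧ (j : ℕ) = n - 3) ∨
            ((i : ℕ) = n - 3 ∧ (j : ℕ) = n - 1) then (1 : ℝ) else 0) →
        IsPrimitive L ∧ ExpIs L (2 * (n - 2))) := by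
  constructor
  · ext e
    simp only [expSet, Set.mem_setOf_eq]
    constructor
    · rintro ⟨A, hmem, hprim, hexp⟩
      exact PSCaux.forward_exp hn (by omega) hmem hprim hexp
    · rintro ⟨t, ht1, ht2, rfl⟩
      have hs1 : 1 ≤ t - 1 := by omega
      have hs2 : t - 1 ≤ n - 3 := by omega
      obtain ⟨hprim, hexp⟩ := PSCaux.intA_expIs hn (by omega) hs1 hs2
      refine ⟨PSCaux.intA n (t - 1), PSCaux.intA_mem hn (by omega) hs1, hprim, ?_⟩
      have h2t : 2 * (t - 1) + 2 = 2 * t := by omega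
      rwa [h2t] at hexp
  · intro L hL
    subst hL
    exact PSCaux.lol_main hn
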